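/- Let 𝔹 = GF(q), 𝔽' = GF(q^{ℓ'}), 𝔼 = GF(q^a), and 𝔽 = GF(q^{aℓ'}), where a and ℓ' are relatively prime and q is a prime power. View 𝔽' and 𝔼 as subfields of 𝔽. Then for any finite set {γ₁, γ₂, ..., γ_m} of elements of 𝔽', the rank of {γ₁, ..., γ_m} over 𝔼 (i.e., the dimension of its 𝔼-span in 𝔽) equals the rank of {γ₁, ..., γ_m} over 𝔹 (the dimension of its 𝔹-span in 𝔽'). -/
import Mathlib

open Module Submodule

/-- with `𝔹 = GF(q) ≤ 𝔽' = GF(q^ℓ') ≤ 𝔽 = GF(q^{aℓ'})` and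
`𝔼 = GF(q^a) ≤ 𝔽`, `gcd(a, ℓ') = 1`, the rank over `𝔼` of a finite subset of `𝔽'`
(inside `𝔽`) equals its rank over `𝔹`. -/
theorem stmt2 (q a ℓ' m : ℕ) (hq : IsPrimePow q) (hgcd : Nat.Coprime a ℓ')
    (B E F' F : Type*) [Field B] [Field E] [Field F'] [Field F]
    [Algebra B E] [Algebra B F'] [Algebra B F] [Algebra E F] [Algebra F' F]
    [IsScalarTower B E F] [IsScalarTower B F' F]
    [Fintype B] [Fintype E] [Fintype F'] [Fintype F]
    (hB : Fintype.card B = q) (hE : Fintype.card E = q ^ a)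
    (hF' : Fintype.card F' = q ^ ℓ') (hF : Fintype.card F = q ^ (a * ℓ'))
    (γ : Fin m → F') :
    Module.finrank E (Submodule.span E (Set.range fun i => algebraMap F' F (γ i))) =
      Module.finrank B (Submodule.span B (Set.range γ)) := by
  have hq2 : 2 ≤ q := hq.two_le
  -- degree computations
  have hrE : Module.finrank B E = a := by
    have h := card_eq_pow_finrank (K := B) (V := E)
    rw [hB, hE] at h
    exact (Nat.pow_right_injective hq2 h.symm)
  have hrF' : Module.finrank B F' = ℓ' := by
    have h := card_eq_pow_finrank (K := B) (V := F')
    rw [hB, hF'] at h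
    exact (Nat.pow_right_injective hq2 h.symm)
  set f : F' →ₐ[B] F := IsScalarTower.toAlgHom B F' F with hfdef
  set A : IntermediateField B F := f.fieldRange with hAdef
  have hrA : Module.finrank B A = ℓ' := by
    rw [← hrF']
    exact ((AlgEquiv.ofInjectiveField f).toLinearEquiv.finrank_eq).symm
  have H : A.LinearDisjoint E :=
    IntermediateField.LinearDisjoint.of_finrank_coprime (by rw [hrA, hrE]; exact hgcd.symm)
  -- the key span identity
  have key : ∀ {k : ℕ} (u : Fin k → F'),
      span E (Set.range fun i => algebraMap F' F (u i)) =
        span E (algebraMap F' F '' (span B (Set.range u) : Set F')) := by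
    intro k u
    apply le_antisymm
    · rw [span_le]
      rintro x ⟨i, rfl⟩
      exact subset_span ⟨u i, subset_span ⟨i, rfl⟩, rfl⟩
    · rw [span_le]
      rintro x ⟨y, hy, rfl⟩
      induction hy using Submodule.span_induction with
      | mem z hz => obtain ⟨i, rfl⟩ := hz; exact subset_span ⟨i, rfl⟩
      | zero => simp only [map_zero]; exact (span E (Set.range fun i => algebraMap F' F (u i))).zero_mem
      | add p q' hp hq' ihp ihq =>
          rw [map_add]; exact add_mem ihp ihq
      | smul c p hp ih =>
          rw [Algebra.smul_def, map_mul, ← IsScalarTower.algebraMap_apply,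
            IsScalarTower.algebraMap_apply B E F, ← Algebra.smul_def]
          exact (span E (Set.range fun i => algebraMap F' F (u i))).smul_mem _ ih
  set V : Submodule B F' := span B (Set.range γ) with hVdef
  set n : ℕ := Module.finrank B V with hndef
  set u : Fin n → F' := fun j => (Module.finBasis B V j : F') with hudef
  have hspan : span B (Set.range u) = V := by
    have h1 : Set.range u = V.subtype '' Set.range (Module.finBasis B V) := by
      rw [← Set.range_comp]; rfl
    rw [h1, ← Submodule.map_span, Basis.span_eq, Submodule.map_top, Submodule.range_subtype]
  have hu : LinearIndependent B u :=
    (Module.finBasis B V).linearIndependent.map' V.subtype (Submodule.ker_subtype V)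
  have huF : LinearIndependent B (fun j => algebraMap F' F (u j)) :=
    hu.map' f.toLinearMap (LinearMap.ker_eq_bot.mpr (algebraMap F' F).injective)
  set aFam : Fin n → A := fun j => ⟨algebraMap F' F (u j), ⟨u j, rfl⟩⟩ with haFamdef
  have haI : LinearIndependent B aFam :=
    LinearIndependent.of_comp A.val.toLinearMap huF
  have hw : LinearIndependent E (fun j => algebraMap F' F (u j)) :=
    H.linearIndependent_left haI
  calc Module.finrank E (span E (Set.range fun i => algebraMap F' F (γ i)))
      = Module.finrank E (span E (algebraMap F' F '' (V : Set F'))) := by rw [key γ]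
    _ = Module.finrank E (span E (Set.range fun j => algebraMap F' F (u j))) := by
        rw [key u, hspan]
    _ = n := by rw [finrank_span_eq_card hw, Fintype.card_fin]
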